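/- arXiv:1607.03288 — 2 statements merged into one kernel-verified Lean document; each statement's English description precedes it below -/
import Mathlib

section
/- Let χ be a real primitive Dirichlet character modulo q₀ ≥ 3 and λ = 1⋆χ. Let j ≥ 0 be an integer and let u be a squarefree positive integer with λ(u) ≠ 0. Then λ_j(u) = λ(u) · ∑_{q ∣ u} Λ*_j(q), where the sum is over the positive divisors q of u. -/
open Complex

/-- `λ = 1 ⋆ χ`. -/
noncomputable def lamFun {q₀ : ℕ} (χ : DirichletCharacter ℂ q₀) (n : ℕ) : ℂ :=
  ∑ d ∈ n.divisors, χ (d : ZMod q₀)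

/-- The generalized von Mangoldt function `Λ_j = μ ⋆ (log)^j`. -/
noncomputable def LambdaJ (j : ℕ) (n : ℕ) : ℝ :=
  ∑ d ∈ n.divisors, (ArithmeticFunction.moebius d : ℝ) * Real.log ((n / d : ℕ) : ℝ) ^ j

/-- `Λ*_j(q) = (τ(gcd(q,q₀)) / (2^j·τ(q))) · ∑_{mn=q} χ(m) ∑_{a+b=j} C(j,a)·(−1)^b·Λ_a(m)·Λ_b(n)`. -/
noncomputable def LambdaStar {q₀ : ℕ} (χ : DirichletCharacter ℂ q₀) (j : ℕ) (q : ℕ) : ℂ :=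
  (((Nat.gcd q q₀).divisors.card : ℂ) / (2 ^ j * (q.divisors.card : ℂ))) *
    ∑ m ∈ q.divisors, χ (m : ZMod q₀) *
      ∑ p ∈ Finset.HasAntidiagonal.antidiagonal j,
        (j.choose p.1 : ℂ) * (-1) ^ p.2 * (LambdaJ p.1 m : ℂ) * (LambdaJ p.2 (q / m) : ℂ)

/-- `λ_j(u) = ∑_{c ∣ u} χ(c)·(log(c/√u))^j`. -/
noncomputable def lamJ {q₀ : ℕ} (χ : DirichletCharacter ℂ q₀) (j : ℕ) (u : ℕ) : ℂ :=
  ∑ c ∈ u.divisors, χ (c : ZMod q₀) * ((Real.log ((c : ℝ) / Real.sqrt u)) ^ j : ℝ)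

/-! ### Auxiliary lemmas -/

/-- `χ` as an arithmetic function. -/
noncomputable def chiAF {q₀ : ℕ} (χ : DirichletCharacter ℂ q₀) : ArithmeticFunction ℂ :=
  ⟨fun n => if n = 0 then 0 else χ (n : ZMod q₀), by simp⟩

lemma chiAF_apply {q₀ : ℕ} (χ : DirichletCharacter ℂ q₀) {n : ℕ} (hn : n ≠ 0) :
    chiAF χ n = χ (n : ZMod q₀) := if_neg hn

lemma chiAF_mult {q₀ : ℕ} (χ : DirichletCharacter ℂ q₀) : (chiAF χ).IsMultiplicative := by
  constructor
  · simp [chiAF, ArithmeticFunction.coe_mk]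
  · intro m n _
    rcases eq_or_ne m 0 with rfl | hm
    · simp [chiAF, ArithmeticFunction.coe_mk]
    rcases eq_or_ne n 0 with rfl | hn
    · simp [chiAF, ArithmeticFunction.coe_mk]
    rw [chiAF_apply _ (mul_ne_zero hm hn), chiAF_apply _ hm, chiAF_apply _ hn]
    push_cast
    exact map_mul χ _ _

lemma lamFun_eq {q₀ : ℕ} (χ : DirichletCharacter ℂ q₀) (n : ℕ) :
    lamFun χ n = (↑ArithmeticFunction.zeta * chiAF χ) n := by
  rw [ArithmeticFunction.coe_zeta_mul_apply]
  exact Finset.sum_congr rfl fun d hd => (chiAF_apply χ (Nat.pos_of_mem_divisors hd).ne').symm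

lemma lamFun_mul {q₀ : ℕ} (χ : DirichletCharacter ℂ q₀) {m n : ℕ} (h : m.Coprime n) :
    lamFun χ (m * n) = lamFun χ m * lamFun χ n := by
  rw [lamFun_eq, lamFun_eq, lamFun_eq]
  exact (ArithmeticFunction.isMultiplicative_zeta.natCast.mul (chiAF_mult χ)).map_mul_of_coprime h

lemma lamFun_one {q₀ : ℕ} (χ : DirichletCharacter ℂ q₀) : lamFun χ 1 = 1 := by
  simp [lamFun]

lemma lamFun_prime {q₀ : ℕ} (χ : DirichletCharacter ℂ q₀) {p : ℕ} (hp : p.Prime) :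
    lamFun χ p = 1 + χ (p : ZMod q₀) := by
  rw [lamFun, hp.divisors]
  rw [Finset.sum_insert (by simp [Ne.symm hp.ne_one])]
  simp

lemma prime_factor_eq {q₀ : ℕ} (χ : DirichletCharacter ℂ q₀) (hq₀ : 3 ≤ q₀)
    (hval : ∀ n : ZMod q₀, χ n = -1 ∨ χ n = 0 ∨ χ n = 1)
    {p : ℕ} (hp : p.Prime) (hne : lamFun χ p ≠ 0) :
    lamFun χ p * ((Nat.gcd p q₀).divisors.card : ℂ) = (p.divisors.card : ℂ) := by
  haveI : NeZero q₀ := ⟨by omega⟩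
  rw [lamFun_prime χ hp, hp.divisors]
  have hcard : ({1, p} : Finset ℕ).card = 2 := by
    rw [Finset.card_insert_of_notMem (by simp [Ne.symm hp.ne_one]), Finset.card_singleton]
  rw [hcard]
  rcases hval (p : ZMod q₀) with h | h | h
  · exfalso; apply hne; rw [lamFun_prime χ hp, h]; ring
  · have hunit : ¬ IsUnit ((p : ℕ) : ZMod q₀) := by
      intro hu
      have := hu.map χ
      rw [h] at this
      exact not_isUnit_zero this
    have hcop : ¬ Nat.Coprime p q₀ := fun hc => hunit ((ZMod.isUnit_iff_coprime p q₀).2 hc)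
    have hgcd : Nat.gcd p q₀ = p := by
      rcases Nat.Prime.eq_one_or_self_of_dvd hp _ (Nat.gcd_dvd_left p q₀) with h1 | h1
      · exact absurd h1 hcop
      · exact h1
    rw [hgcd, h, hp.divisors, hcard]
    ring
  · have hunit : IsUnit ((p : ℕ) : ZMod q₀) := by
      by_contra hu
      rw [χ.map_nonunit hu] at h
      exact one_ne_zero h.symm
    have hgcd : Nat.gcd p q₀ = 1 := (ZMod.isUnit_iff_coprime p q₀).1 hunit
    rw [hgcd, h, Nat.divisors_one]
    norm_num

lemma keyL {q₀ : ℕ} (χ : DirichletCharacter ℂ q₀) (hq₀ : 3 ≤ q₀)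
    (hval : ∀ n : ZMod q₀, χ n = -1 ∨ χ n = 0 ∨ χ n = 1) :
    ∀ q : ℕ, Squarefree q → lamFun χ q ≠ 0 →
      lamFun χ q * ((Nat.gcd q q₀).divisors.card : ℂ) = (q.divisors.card : ℂ) := by
  intro q
  induction q using Nat.strong_induction_on with
  | _ q ih =>
    intro hsq hne
    rcases eq_or_ne q 1 with rfl | hq1
    · simp [lamFun_one]
    · obtain ⟨p, hp, hpd⟩ := Nat.exists_prime_and_dvd hq1
      obtain ⟨t, rfl⟩ := hpd
      have hq0 : p * t ≠ 0 := hsq.ne_zero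
      have ht0 : t ≠ 0 := fun h => hq0 (by simp [h])
      have hp0 : p ≠ 0 := hp.pos.ne'
      have hcop : Nat.Coprime p t := by
        rcases Nat.coprime_or_dvd_of_prime hp t with h | h
        · exact h
        · exact absurd (Nat.isUnit_iff.1 (hsq p (mul_dvd_mul_left p h))) hp.ne_one
      have hsqt : Squarefree t := hsq.squarefree_of_dvd ⟨p, mul_comm p t⟩
      rw [lamFun_mul χ hcop] at hne ⊢
      have hnep : lamFun χ p ≠ 0 := left_ne_zero_of_mul hne
      have hnet : lamFun χ t ≠ 0 := right_ne_zero_of_mul hne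
      have htlt : t < p * t := by
        nlinarith [hp.one_lt, Nat.pos_of_ne_zero ht0]
      have iht := ih t htlt hsqt hnet
      have hgcd : Nat.gcd (p * t) q₀ = Nat.gcd p q₀ * Nat.gcd t q₀ := by
        rw [Nat.gcd_comm (p * t) q₀, Nat.Coprime.gcd_mul q₀ hcop, Nat.gcd_comm q₀ p,
          Nat.gcd_comm q₀ t]
      have hcop2 : (Nat.gcd p q₀).Coprime (Nat.gcd t q₀) :=
        Nat.Coprime.coprime_dvd_right (Nat.gcd_dvd_left t q₀)
          (Nat.Coprime.coprime_dvd_left (Nat.gcd_dvd_left p q₀) hcop)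
      rw [hgcd, Nat.Coprime.card_divisors_mul hcop2, Nat.Coprime.card_divisors_mul hcop]
      push_cast
      rw [show lamFun χ p * lamFun χ t * ((Nat.gcd p q₀).divisors.card *
          (Nat.gcd t q₀).divisors.card : ℂ) =
          (lamFun χ p * (Nat.gcd p q₀).divisors.card) *
          (lamFun χ t * (Nat.gcd t q₀).divisors.card) by ring,
        prime_factor_eq χ hq₀ hval hp hnep, iht]

lemma sum_LambdaJ (a : ℕ) : ∀ c : ℕ, 0 < c →
    ∑ m ∈ c.divisors, LambdaJ a m = (Real.log c) ^ a := by
  rw [ArithmeticFunction.sum_eq_iff_sum_smul_moebius_eq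
    (f := LambdaJ a) (g := fun n => (Real.log n) ^ a)]
  intro n hn
  rw [Nat.sum_divisorsAntidiagonal
    (f := fun d e => (ArithmeticFunction.moebius d) • ((Real.log e) ^ a))]
  unfold LambdaJ
  refine Finset.sum_congr rfl fun d hd => ?_
  rw [zsmul_eq_mul]

lemma log_div_sqrt {u c : ℕ} (hu : u ≠ 0) (hc : c ∣ u) :
    Real.log ((c : ℝ) / Real.sqrt u) =
      (Real.log c - Real.log ((u / c : ℕ) : ℝ)) / 2 := by
  have hc0 : c ≠ 0 := fun h => hu (by simpa [h] using hc)
  have hcR : (c : ℝ) ≠ 0 := Nat.cast_ne_zero.2 hc0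
  have hdR : ((u / c : ℕ) : ℝ) ≠ 0 :=
    Nat.cast_ne_zero.2 ((Nat.div_ne_zero_iff_of_dvd hc).mpr ⟨hu, hc0⟩)
  have hsq : Real.sqrt u ≠ 0 := by
    refine Real.sqrt_ne_zero'.2 ?_
    exact_mod_cast Nat.pos_of_ne_zero hu
  have hmul : (u : ℝ) = (c : ℝ) * ((u / c : ℕ) : ℝ) := by
    rw [← Nat.cast_mul, Nat.mul_div_cancel' hc]
  rw [Real.log_div hcR hsq, Real.log_sqrt (by positivity), hmul,
    Real.log_mul hcR hdR]
  ring

lemma binom_expand (j : ℕ) (x y : ℂ) :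
    ((x - y) / 2) ^ j = ((2 : ℂ) ^ j)⁻¹ *
      ∑ p ∈ Finset.HasAntidiagonal.antidiagonal j,
        (j.choose p.1 : ℂ) * (-1) ^ p.2 * x ^ p.1 * y ^ p.2 := by
  rw [div_pow, div_eq_mul_inv, mul_comm]
  congr 1
  rw [sub_eq_add_neg, add_pow, Finset.Nat.sum_antidiagonal_eq_sum_range_succ_mk]
  refine Finset.sum_congr rfl fun k hk => ?_
  rw [neg_pow]
  ring

lemma triple_swap {q₀ : ℕ} (χ : DirichletCharacter ℂ q₀) (u : ℕ) (hu : u ≠ 0) (F G : ℕ → ℂ) :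
    ∑ c ∈ u.divisors, χ (c : ZMod q₀) *
        ((∑ m ∈ c.divisors, F m) * (∑ n ∈ (u / c).divisors, G n)) =
    ∑ q ∈ u.divisors, ∑ m ∈ q.divisors, ∑ d ∈ (u / q).divisors,
        χ (m : ZMod q₀) * χ (d : ZMod q₀) * F m * G (q / m) := by
  have hL : ∑ c ∈ u.divisors, χ (c : ZMod q₀) *
        ((∑ m ∈ c.divisors, F m) * (∑ n ∈ (u / c).divisors, G n)) =
      ∑ x ∈ u.divisors.sigma (fun c => c.divisors ×ˢ (u / c).divisors),
        χ (x.1 : ZMod q₀) * F x.2.1 * G x.2.2 := by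
    rw [Finset.sum_sigma]
    refine Finset.sum_congr rfl fun c hc => ?_
    rw [Finset.sum_product, Finset.sum_mul_sum, Finset.mul_sum]
    refine Finset.sum_congr rfl fun m hm => ?_
    rw [Finset.mul_sum]
    exact Finset.sum_congr rfl fun n hn => by ring
  have hR : ∑ q ∈ u.divisors, ∑ m ∈ q.divisors, ∑ d ∈ (u / q).divisors,
        χ (m : ZMod q₀) * χ (d : ZMod q₀) * F m * G (q / m) =
      ∑ x ∈ u.divisors.sigma (fun q => q.divisors ×ˢ (u / q).divisors),
        χ (x.2.1 : ZMod q₀) * χ (x.2.2 : ZMod q₀) * F x.2.1 * G (x.1 / x.2.1) := by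
    rw [Finset.sum_sigma]
    refine Finset.sum_congr rfl fun q hq => ?_
    rw [Finset.sum_product]
  rw [hL, hR]
  have hmem : ∀ x : Σ _ : ℕ, ℕ × ℕ,
      x ∈ u.divisors.sigma (fun c => c.divisors ×ˢ (u / c).divisors) →
      (⟨x.2.1 * x.2.2, (x.2.1, x.1 / x.2.1)⟩ : Σ _ : ℕ, ℕ × ℕ) ∈
        u.divisors.sigma (fun c => c.divisors ×ˢ (u / c).divisors) := by
    rintro ⟨c, m, n⟩ hx
    simp only [Finset.mem_sigma, Finset.mem_product, Nat.mem_divisors] at hx ⊢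
    obtain ⟨⟨hcu, -⟩, ⟨hmc, hc0⟩, ⟨hnd, hd0⟩⟩ := hx
    have hm0 : m ≠ 0 := fun h => hc0 (Nat.eq_zero_of_zero_dvd (h ▸ hmc))
    have hn0 : n ≠ 0 := fun h => hd0 (Nat.eq_zero_of_zero_dvd (h ▸ hnd))
    have hcn : c * n ∣ u := by
      obtain ⟨k, hk⟩ := hnd
      have : u = c * (u / c) := (Nat.div_mul_cancel hcu).symm ▸ (Nat.mul_div_cancel' hcu).symm
      rw [this, hk]
      exact ⟨k, by ring⟩
    have hmn : m * n ∣ u := dvd_trans (mul_dvd_mul_right hmc n) hcn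
    refine ⟨⟨hmn, hu⟩, ⟨⟨Dvd.intro n rfl, mul_ne_zero hm0 hn0⟩, ?_, ?_⟩⟩
    · rw [Nat.dvd_div_iff_mul_dvd hmn]
      have : m * n * (c / m) = c * n := by
        rw [show m * n * (c / m) = m * (c / m) * n by ring, Nat.mul_div_cancel' hmc]
      rw [this]
      exact hcn
    · exact fun h => hu (Nat.eq_zero_of_zero_dvd (h ▸ Nat.div_dvd_of_dvd hmn))
  have hinv : ∀ x : Σ _ : ℕ, ℕ × ℕ,
      x ∈ u.divisors.sigma (fun c => c.divisors ×ˢ (u / c).divisors) →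
      (⟨x.2.1 * (x.1 / x.2.1), ((x.2.1 : ℕ), (x.2.1 * x.2.2) / x.2.1)⟩ : Σ _ : ℕ, ℕ × ℕ) = x := by
    rintro ⟨c, m, n⟩ hx
    simp only [Finset.mem_sigma, Finset.mem_product, Nat.mem_divisors] at hx
    obtain ⟨⟨hcu, -⟩, ⟨hmc, hc0⟩, -⟩ := hx
    have hm0 : m ≠ 0 := fun h => hc0 (Nat.eq_zero_of_zero_dvd (h ▸ hmc))
    rw [Nat.mul_div_cancel' hmc, Nat.mul_div_cancel_left _ (Nat.pos_of_ne_zero hm0)]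
  refine Finset.sum_nbij' (fun x => ⟨x.2.1 * x.2.2, (x.2.1, x.1 / x.2.1)⟩)
    (fun x => ⟨x.2.1 * x.2.2, (x.2.1, x.1 / x.2.1)⟩) hmem hmem ?_ ?_ ?_
  · intro x hx
    exact hinv x hx
  · intro x hx
    exact hinv x hx
  · rintro ⟨c, m, n⟩ hx
    simp only [Finset.mem_sigma, Finset.mem_product, Nat.mem_divisors] at hx
    obtain ⟨⟨hcu, -⟩, ⟨hmc, hc0⟩, -⟩ := hx
    have hm0 : m ≠ 0 := fun h => hc0 (Nat.eq_zero_of_zero_dvd (h ▸ hmc))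
    simp only
    rw [Nat.mul_div_cancel_left _ (Nat.pos_of_ne_zero hm0)]
    have : χ (c : ZMod q₀) = χ (m : ZMod q₀) * χ ((c / m : ℕ) : ZMod q₀) := by
      rw [← map_mul, ← Nat.cast_mul, Nat.mul_div_cancel' hmc]
    rw [this]

theorem statement17 :
    ∀ (q₀ : ℕ) (χ : DirichletCharacter ℂ q₀),
      3 ≤ q₀ → χ.IsPrimitive →
      (∀ n : ZMod q₀, χ n = -1 ∨ χ n = 0 ∨ χ n = 1) →
      ∀ j : ℕ, ∀ u : ℕ, 0 < u → Squarefree u → lamFun χ u ≠ 0 →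
        lamJ χ j u = lamFun χ u * ∑ q ∈ u.divisors, LambdaStar χ j q := by
  intro q₀ χ hq₀ hprim hval j u hu hsf hne
  have hu0 : u ≠ 0 := hu.ne'
  have h2j : ((2 : ℂ) ^ j) ≠ 0 := pow_ne_zero _ two_ne_zero
  -- LHS reduction
  have hLHS : lamJ χ j u = ((2 : ℂ) ^ j)⁻¹ *
      ∑ p ∈ Finset.HasAntidiagonal.antidiagonal j, (j.choose p.1 : ℂ) * (-1) ^ p.2 *
        ∑ c ∈ u.divisors, χ (c : ZMod q₀) *
          ((∑ m ∈ c.divisors, (LambdaJ p.1 m : ℂ)) *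
           (∑ n ∈ (u / c).divisors, (LambdaJ p.2 n : ℂ))) := by
    have hpt : ∀ c ∈ u.divisors,
        χ (c : ZMod q₀) * ((Real.log ((c : ℝ) / Real.sqrt u)) ^ j : ℝ) =
        ∑ p ∈ Finset.HasAntidiagonal.antidiagonal j, ((2 : ℂ) ^ j)⁻¹ *
          ((j.choose p.1 : ℂ) * (-1) ^ p.2 *
            (χ (c : ZMod q₀) *
              ((∑ m ∈ c.divisors, (LambdaJ p.1 m : ℂ)) *
               (∑ n ∈ (u / c).divisors, (LambdaJ p.2 n : ℂ))))) := by
      intro c hc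
      obtain ⟨hcd, -⟩ := Nat.mem_divisors.1 hc
      have hc0 : 0 < c := Nat.pos_of_mem_divisors hc
      have hd0 : 0 < u / c := Nat.div_pos (Nat.le_of_dvd hu hcd) hc0
      have h1 : (((Real.log ((c : ℝ) / Real.sqrt u)) ^ j : ℝ) : ℂ) =
          ((2 : ℂ) ^ j)⁻¹ * ∑ p ∈ Finset.HasAntidiagonal.antidiagonal j,
            (j.choose p.1 : ℂ) * (-1) ^ p.2 *
              ((Real.log c : ℂ)) ^ p.1 * ((Real.log ((u / c : ℕ) : ℝ) : ℂ)) ^ p.2 := by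
        rw [log_div_sqrt hu0 hcd]
        push_cast
        exact binom_expand j _ _
      rw [h1]
      rw [Finset.mul_sum _ _ ((2 : ℂ) ^ j)⁻¹, Finset.mul_sum _ _ (χ (c : ZMod q₀))]
      refine Finset.sum_congr rfl fun p hp => ?_
      have hx : ((Real.log c : ℂ)) ^ p.1 = ∑ m ∈ c.divisors, (LambdaJ p.1 m : ℂ) := by
        rw [← Complex.ofReal_pow, ← sum_LambdaJ p.1 c hc0]
        push_cast
        rfl
      have hy : ((Real.log ((u / c : ℕ) : ℝ) : ℂ)) ^ p.2 =
          ∑ n ∈ (u / c).divisors, (LambdaJ p.2 n : ℂ) := by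
        rw [← Complex.ofReal_pow, ← sum_LambdaJ p.2 (u / c) hd0]
        push_cast
        rfl
      rw [hx, hy]
      ring
    rw [lamJ, Finset.sum_congr rfl hpt, Finset.sum_comm]
    conv_rhs => rw [Finset.mul_sum]
    refine Finset.sum_congr rfl fun p hp => ?_
    conv_rhs => rw [Finset.mul_sum, Finset.mul_sum]
  -- key divisor identity
  have hkey : ∀ q ∈ u.divisors,
      lamFun χ u * (((Nat.gcd q q₀).divisors.card : ℂ) / (2 ^ j * (q.divisors.card : ℂ))) =
      ((2 : ℂ) ^ j)⁻¹ * lamFun χ (u / q) := by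
    intro q hq
    obtain ⟨hqd, -⟩ := Nat.mem_divisors.1 hq
    have hq0 : q ≠ 0 := (Nat.pos_of_mem_divisors hq).ne'
    have hqsf : Squarefree q := hsf.squarefree_of_dvd hqd
    have hcop : Nat.Coprime q (u / q) := by
      have hd : Nat.gcd q (u / q) * Nat.gcd q (u / q) ∣ u := by
        calc Nat.gcd q (u / q) * Nat.gcd q (u / q)
            ∣ q * (u / q) := mul_dvd_mul (Nat.gcd_dvd_left _ _) (Nat.gcd_dvd_right _ _)
          _ = u := Nat.mul_div_cancel' hqd
      exact Nat.isUnit_iff.1 (hsf _ hd)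
    have hfact : lamFun χ u = lamFun χ q * lamFun χ (u / q) := by
      conv_lhs => rw [show u = q * (u / q) from (Nat.mul_div_cancel' hqd).symm]
      exact lamFun_mul χ hcop
    have hneq : lamFun χ q ≠ 0 := by
      rw [hfact] at hne
      exact left_ne_zero_of_mul hne
    have hL := keyL χ hq₀ hval q hqsf hneq
    have hτ : (q.divisors.card : ℂ) ≠ 0 := by
      have : q.divisors.card ≠ 0 :=
        Finset.card_ne_zero_of_mem (Nat.mem_divisors_self q hq0)
      exact_mod_cast this
    rw [hfact]
    calc lamFun χ q * lamFun χ (u / q) *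
          (((Nat.gcd q q₀).divisors.card : ℂ) / (2 ^ j * (q.divisors.card : ℂ)))
        = ((2 : ℂ) ^ j)⁻¹ * lamFun χ (u / q) *
            ((lamFun χ q * ((Nat.gcd q q₀).divisors.card : ℂ)) / (q.divisors.card : ℂ)) := by
          rw [div_eq_mul_inv, div_eq_mul_inv, mul_inv]
          ring
      _ = ((2 : ℂ) ^ j)⁻¹ * lamFun χ (u / q) *
            ((q.divisors.card : ℂ) / (q.divisors.card : ℂ)) := by rw [hL]
      _ = ((2 : ℂ) ^ j)⁻¹ * lamFun χ (u / q) := by rw [div_self hτ, mul_one]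
  -- RHS reduction
  have hRHS : lamFun χ u * ∑ q ∈ u.divisors, LambdaStar χ j q =
      ((2 : ℂ) ^ j)⁻¹ *
        ∑ p ∈ Finset.HasAntidiagonal.antidiagonal j, (j.choose p.1 : ℂ) * (-1) ^ p.2 *
          ∑ q ∈ u.divisors, ∑ m ∈ q.divisors, ∑ d ∈ (u / q).divisors,
            χ (m : ZMod q₀) * χ (d : ZMod q₀) * (LambdaJ p.1 m : ℂ) *
              (LambdaJ p.2 (q / m) : ℂ) := by
    rw [Finset.mul_sum]
    have step1 : ∀ q ∈ u.divisors, lamFun χ u * LambdaStar χ j q =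
        ((2 : ℂ) ^ j)⁻¹ * ∑ p ∈ Finset.HasAntidiagonal.antidiagonal j,
          ∑ m ∈ q.divisors, ∑ d ∈ (u / q).divisors,
            (j.choose p.1 : ℂ) * (-1) ^ p.2 *
              (χ (m : ZMod q₀) * χ (d : ZMod q₀) * (LambdaJ p.1 m : ℂ) *
                (LambdaJ p.2 (q / m) : ℂ)) := by
      intro q hq
      rw [LambdaStar, ← mul_assoc, hkey q hq, mul_assoc]
      congr 1
      rw [Finset.mul_sum]
      refine Eq.trans (Finset.sum_congr rfl fun m hm => ?_) Finset.sum_comm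
      -- per m : lamFun χ (u/q) * (χ m * ∑ p ...) = ∑ p ∑ d ...
      trans (∑ d ∈ (u / q).divisors, ∑ p ∈ Finset.HasAntidiagonal.antidiagonal j,
        (j.choose p.1 : ℂ) * (-1) ^ p.2 *
          (χ (m : ZMod q₀) * χ (d : ZMod q₀) * (LambdaJ p.1 m : ℂ) *
            (LambdaJ p.2 (q / m) : ℂ)))
      · rw [lamFun, Finset.sum_mul]
        refine Finset.sum_congr rfl fun d hd => ?_
        rw [Finset.mul_sum, Finset.mul_sum]
        exact Finset.sum_congr rfl fun p hp => by ring
      · exact Finset.sum_comm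
    rw [Finset.sum_congr rfl step1, ← Finset.mul_sum]
    congr 1
    rw [Finset.sum_comm]
    refine Finset.sum_congr rfl fun p hp => ?_
    conv_rhs => rw [Finset.mul_sum]
    refine Finset.sum_congr rfl fun q hq => ?_
    conv_rhs => rw [Finset.mul_sum]
    refine Finset.sum_congr rfl fun m hm => ?_
    conv_rhs => rw [Finset.mul_sum]
  rw [hLHS, hRHS]
  congr 1
  refine Finset.sum_congr rfl fun p hp => ?_
  congr 1
  exact triple_swap χ u hu0 (fun m => (LambdaJ p.1 m : ℂ)) (fun n => (LambdaJ p.2 n : ℂ))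
end

section
/- Let χ be a real primitive Dirichlet character modulo q₀ ≥ 3 and λ = 1⋆χ. Let j ≥ 0 be an integer and let u, v be coprime positive integers such that w = uv is squarefree and λ(w) ≠ 0. Then λ_j(w) = λ(w) · ∑_{a+b=j} binom(j,a) · ( ∑_{q ∣ u} Λ*_a(q) ) · ( ∑_{r ∣ v} Λ*_b(r) ). -/
open Complex

namespace St18

open Finset PowerSeries

/-! ### Splitting divisor sums over coprime products -/

lemma sum_div_split {M : Type*} [AddCommMonoid M] {m n : ℕ} (h : Nat.Coprime m n) (f : ℕ → M) :
    ∑ d ∈ (m * n).divisors, f d = ∑ a ∈ m.divisors, ∑ b ∈ n.divisors, f (a * b) := by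
  rw [← Finset.sum_product']
  refine (Finset.sum_bij' (fun (p : ℕ × ℕ) _ => p.1 * p.2)
      (fun d _ => (d.gcd m, d.gcd n)) ?_ ?_ ?_ ?_ ?_).symm
  · rintro ⟨a, b⟩ hp
    simp only [Finset.mem_product, Nat.mem_divisors] at hp
    exact Nat.mem_divisors.mpr ⟨mul_dvd_mul hp.1.1 hp.2.1, mul_ne_zero hp.1.2 hp.2.2⟩
  · intro d hd
    rw [Nat.mem_divisors] at hd
    have hm : m ≠ 0 := fun h0 => hd.2 (by simp [h0])
    have hn : n ≠ 0 := fun h0 => hd.2 (by simp [h0])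
    simp only [Finset.mem_product, Nat.mem_divisors]
    exact ⟨⟨Nat.gcd_dvd_right d m, hm⟩, ⟨Nat.gcd_dvd_right d n, hn⟩⟩
  · rintro ⟨a, b⟩ hp
    simp only [Finset.mem_product, Nat.mem_divisors] at hp
    have hbm : b.Coprime m := Nat.Coprime.coprime_dvd_left hp.2.1 h.symm
    have han : a.Coprime n := Nat.Coprime.coprime_dvd_left hp.1.1 h
    have h1 : (a * b).gcd m = a := by
      rw [Nat.Coprime.gcd_mul_right_cancel a hbm, Nat.gcd_eq_left hp.1.1]
    have h2 : (a * b).gcd n = b := by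
      rw [Nat.Coprime.gcd_mul_left_cancel b han, Nat.gcd_eq_left hp.2.1]
    simp [h1, h2]
  · intro d hd
    rw [Nat.mem_divisors] at hd
    exact (Nat.Coprime.gcd_mul d h).symm.trans (Nat.gcd_eq_left hd.1)
  · rintro ⟨a, b⟩ _
    rfl

/-! ### Exponential generating functions -/

noncomputable def egf (F : ℕ → ℂ) : PowerSeries ℂ := PowerSeries.mk fun j => F j / j.factorial

lemma coeff_egf (F : ℕ → ℂ) (j : ℕ) : coeff j (egf F) = F j / j.factorial :=
  coeff_mk _ _

lemma egf_inj {F G : ℕ → ℂ} (h : egf F = egf G) : F = G := by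
  funext j
  have h2 := congrArg (coeff j) h
  rw [coeff_egf, coeff_egf, div_eq_div_iff (by exact_mod_cast j.factorial_ne_zero)
    (by exact_mod_cast j.factorial_ne_zero)] at h2
  exact mul_right_cancel₀ (by exact_mod_cast j.factorial_ne_zero) h2

lemma egf_bc (F G : ℕ → ℂ) :
    egf (fun j => ∑ p ∈ antidiagonal j, (j.choose p.1 : ℂ) * F p.1 * G p.2) = egf F * egf G := by
  ext j
  rw [coeff_egf, PowerSeries.coeff_mul, Finset.sum_div]
  refine Finset.sum_congr rfl fun p hp => ?_
  rw [coeff_egf, coeff_egf]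
  have hj : p.1 + p.2 = j := Finset.HasAntidiagonal.mem_antidiagonal.mp hp
  have hfact : ((j.choose p.1 : ℂ)) * p.1.factorial * p.2.factorial = j.factorial := by
    subst hj
    have := Nat.choose_mul_factorial_mul_factorial (Nat.le_add_right p.1 p.2)
    rw [Nat.add_sub_cancel_left] at this
    exact_mod_cast this
  have h1 : (p.1.factorial : ℂ) ≠ 0 := by exact_mod_cast p.1.factorial_ne_zero
  have h2 : (p.2.factorial : ℂ) ≠ 0 := by exact_mod_cast p.2.factorial_ne_zero
  have hjf : (j.factorial : ℂ) ≠ 0 := by exact_mod_cast j.factorial_ne_zero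
  field_simp
  rw [← hfact]; ring

lemma egf_mul_of_bc {H F G : ℕ → ℂ}
    (h : ∀ j, H j = ∑ p ∈ antidiagonal j, (j.choose p.1 : ℂ) * F p.1 * G p.2) :
    egf H = egf F * egf G := by
  have hH : H = fun j => ∑ p ∈ antidiagonal j, (j.choose p.1 : ℂ) * F p.1 * G p.2 := funext h
  rw [hH, egf_bc]

lemma bc_of_egf_mul {H F G : ℕ → ℂ} (h : egf H = egf F * egf G) (j : ℕ) :
    H j = ∑ p ∈ antidiagonal j, (j.choose p.1 : ℂ) * F p.1 * G p.2 :=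
  congrFun (egf_inj (h.trans (egf_bc F G).symm)) j

lemma egf_smul (c : ℂ) (F : ℕ → ℂ) :
    egf (fun j => c * F j) = PowerSeries.C c * egf F := by
  ext j; rw [coeff_egf, PowerSeries.coeff_C_mul, coeff_egf, mul_div_assoc]

lemma pointwise_of_egf_C_mul {F G : ℕ → ℂ} {c : ℂ} (h : egf F = PowerSeries.C c * egf G)
    (j : ℕ) : F j = c * G j :=
  congrFun (egf_inj (h.trans (egf_smul c G).symm)) j

lemma egf_sum {ι : Type*} (s : Finset ι) (F : ι → ℕ → ℂ) :
    egf (fun j => ∑ i ∈ s, F i j) = ∑ i ∈ s, egf (F i) := by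
  ext j
  rw [coeff_egf, map_sum, Finset.sum_div]
  exact Finset.sum_congr rfl fun i _ => (coeff_egf _ _).symm

lemma egf_rescale (c : ℂ) (r : ℂ) (F : ℕ → ℂ) :
    egf (fun j => c * r ^ j * F j) = PowerSeries.C c * rescale r (egf F) := by
  ext j
  rw [coeff_egf, PowerSeries.coeff_C_mul, coeff_rescale, coeff_egf]
  ring

/-! ### Binomial convolution identities for the basic families -/

lemma add_pow_antidiag {R : Type*} [CommSemiring R] (x y : R) (j : ℕ) :
    (x + y) ^ j = ∑ p ∈ antidiagonal j, (j.choose p.1 : R) * x ^ p.1 * y ^ p.2 := by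
  rw [Finset.Nat.sum_antidiagonal_eq_sum_range_succ_mk, add_pow]
  exact Finset.sum_congr rfl fun k _ => by ring

lemma triple_swap {M : Type*} [AddCommMonoid M] {α β γ : Type*}
    (A : Finset α) (B : Finset β) (P : Finset γ) (f : α → β → γ → M) :
    ∑ a ∈ A, ∑ b ∈ B, ∑ p ∈ P, f a b p = ∑ p ∈ P, ∑ a ∈ A, ∑ b ∈ B, f a b p :=
  (Finset.sum_congr rfl fun _ _ => Finset.sum_comm).trans Finset.sum_comm

lemma LambdaJ_bc {m n : ℕ} (h : Nat.Coprime m n) (hm : m ≠ 0) (hn : n ≠ 0) (j : ℕ) :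
    LambdaJ j (m * n) = ∑ p ∈ antidiagonal j,
      (j.choose p.1 : ℝ) * LambdaJ p.1 m * LambdaJ p.2 n := by
  unfold LambdaJ
  rw [sum_div_split h]
  have step : ∀ a ∈ m.divisors, ∀ b ∈ n.divisors,
      (ArithmeticFunction.moebius (a * b) : ℝ) * Real.log (((m * n) / (a * b) : ℕ) : ℝ) ^ j
      = ∑ p ∈ antidiagonal j, (j.choose p.1 : ℝ) *
          ((ArithmeticFunction.moebius a : ℝ) * Real.log ((m / a : ℕ) : ℝ) ^ p.1) *
          ((ArithmeticFunction.moebius b : ℝ) * Real.log ((n / b : ℕ) : ℝ) ^ p.2) := by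
    intro a ha b hb
    obtain ⟨ha1, -⟩ := Nat.mem_divisors.mp ha
    obtain ⟨hb1, -⟩ := Nat.mem_divisors.mp hb
    have hab : a.Coprime b := (h.coprime_dvd_right hb1).coprime_dvd_left ha1
    have hmu : ArithmeticFunction.moebius (a * b)
        = ArithmeticFunction.moebius a * ArithmeticFunction.moebius b :=
      ArithmeticFunction.isMultiplicative_moebius.map_mul_of_coprime hab
    have hdiv : m * n / (a * b) = m / a * (n / b) := (Nat.div_mul_div_comm ha1 hb1).symm
    have hx : ((m / a : ℕ) : ℝ) ≠ 0 := by
      have : 0 < m / a := Nat.div_pos (Nat.le_of_dvd (Nat.pos_of_ne_zero hm) ha1)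
        (Nat.pos_of_mem_divisors ha)
      exact_mod_cast this.ne'
    have hy : ((n / b : ℕ) : ℝ) ≠ 0 := by
      have : 0 < n / b := Nat.div_pos (Nat.le_of_dvd (Nat.pos_of_ne_zero hn) hb1)
        (Nat.pos_of_mem_divisors hb)
      exact_mod_cast this.ne'
    rw [hdiv, Nat.cast_mul, Real.log_mul hx hy, add_pow_antidiag, Finset.mul_sum]
    refine Finset.sum_congr rfl fun p _ => ?_
    rw [hmu]
    push_cast
    ring
  rw [Finset.sum_congr rfl fun a ha => Finset.sum_congr rfl fun b hb => step a ha b hb,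
    triple_swap]
  refine Finset.sum_congr rfl fun p _ => ?_
  rw [mul_assoc, Finset.sum_mul_sum, Finset.mul_sum]
  refine Finset.sum_congr rfl fun a _ => ?_
  rw [Finset.mul_sum]
  exact Finset.sum_congr rfl fun b _ => by ring

lemma lamFun_mul {q₀ : ℕ} (χ : DirichletCharacter ℂ q₀) {u v : ℕ} (h : Nat.Coprime u v) :
    lamFun χ (u * v) = lamFun χ u * lamFun χ v := by
  unfold lamFun
  rw [sum_div_split h, Finset.sum_mul_sum]
  refine Finset.sum_congr rfl fun a _ => Finset.sum_congr rfl fun b _ => ?_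
  push_cast
  rw [map_mul]

lemma lamJ_bc {q₀ : ℕ} (χ : DirichletCharacter ℂ q₀) {u v : ℕ} (h : Nat.Coprime u v)
    (hu : u ≠ 0) (hv : v ≠ 0) (j : ℕ) :
    lamJ χ j (u * v) = ∑ p ∈ antidiagonal j,
      (j.choose p.1 : ℂ) * lamJ χ p.1 u * lamJ χ p.2 v := by
  unfold lamJ
  rw [sum_div_split h]
  have step : ∀ a ∈ u.divisors, ∀ b ∈ v.divisors,
      (χ ((a * b : ℕ) : ZMod q₀))
        * ((Real.log (((a * b : ℕ) : ℝ) / Real.sqrt ((u * v : ℕ) : ℝ)) ^ j : ℝ) : ℂ)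
      = ∑ p ∈ antidiagonal j, (j.choose p.1 : ℂ) *
          (χ (a : ZMod q₀) * ((Real.log ((a : ℝ) / Real.sqrt u) ^ p.1 : ℝ) : ℂ)) *
          (χ (b : ZMod q₀) * ((Real.log ((b : ℝ) / Real.sqrt v) ^ p.2 : ℝ) : ℂ)) := by
    intro a ha b hb
    have ha0 : (0 : ℝ) < (a : ℝ) := by exact_mod_cast Nat.pos_of_mem_divisors ha
    have hb0 : (0 : ℝ) < (b : ℝ) := by exact_mod_cast Nat.pos_of_mem_divisors hb
    have hsu : (0 : ℝ) < Real.sqrt u :=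
      Real.sqrt_pos.mpr (by exact_mod_cast Nat.pos_of_ne_zero hu)
    have hsv : (0 : ℝ) < Real.sqrt v :=
      Real.sqrt_pos.mpr (by exact_mod_cast Nat.pos_of_ne_zero hv)
    have hsplit : Real.log (((a * b : ℕ) : ℝ) / Real.sqrt ((u * v : ℕ) : ℝ))
        = Real.log ((a : ℝ) / Real.sqrt u) + Real.log ((b : ℝ) / Real.sqrt v) := by
      push_cast
      rw [Real.sqrt_mul (by positivity), ← div_mul_div_comm,
        Real.log_mul (by positivity) (by positivity)]
    have hchi : χ ((a * b : ℕ) : ZMod q₀) = χ (a : ZMod q₀) * χ (b : ZMod q₀) := by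
      push_cast
      rw [map_mul]
    rw [hchi, hsplit, add_pow_antidiag]
    push_cast
    rw [Finset.mul_sum]
    exact Finset.sum_congr rfl fun p _ => by ring
  rw [Finset.sum_congr rfl fun a ha => Finset.sum_congr rfl fun b hb => step a ha b hb,
    triple_swap]
  refine Finset.sum_congr rfl fun p _ => ?_
  rw [mul_assoc, Finset.sum_mul_sum, Finset.mul_sum]
  refine Finset.sum_congr rfl fun a _ => ?_
  rw [Finset.mul_sum]
  exact Finset.sum_congr rfl fun b _ => by ring

/-! ### Complex families and their egf multiplicativity -/

noncomputable def LJ (m : ℕ) : ℕ → ℂ := fun j => ((LambdaJ j m : ℝ) : ℂ)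

noncomputable def sLJ (n : ℕ) : ℕ → ℂ := fun j => (-1) ^ j * ((LambdaJ j n : ℝ) : ℂ)

lemma egf_LJ_mul {m n : ℕ} (h : Nat.Coprime m n) (hm : m ≠ 0) (hn : n ≠ 0) :
    egf (LJ (m * n)) = egf (LJ m) * egf (LJ n) := by
  apply egf_mul_of_bc
  intro j
  show ((LambdaJ j (m * n) : ℝ) : ℂ) = _
  rw [LambdaJ_bc h hm hn j]
  push_cast
  rfl

lemma egf_sLJ_mul {m n : ℕ} (h : Nat.Coprime m n) (hm : m ≠ 0) (hn : n ≠ 0) :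
    egf (sLJ (m * n)) = egf (sLJ m) * egf (sLJ n) := by
  apply egf_mul_of_bc
  intro j
  show (-1 : ℂ) ^ j * ((LambdaJ j (m * n) : ℝ) : ℂ) = _
  rw [LambdaJ_bc h hm hn j]
  push_cast
  rw [Finset.mul_sum]
  refine Finset.sum_congr rfl fun p hp => ?_
  have hj : p.1 + p.2 = j := Finset.HasAntidiagonal.mem_antidiagonal.mp hp
  simp only [sLJ]
  rw [← hj, pow_add]
  ring

noncomputable def famU (m n : ℕ) : ℕ → ℂ := fun j =>
  ∑ p ∈ antidiagonal j,
    (j.choose p.1 : ℂ) * (-1) ^ p.2 * ((LambdaJ p.1 m : ℝ) : ℂ) * ((LambdaJ p.2 n : ℝ) : ℂ)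

lemma egf_famU (m n : ℕ) : egf (famU m n) = egf (LJ m) * egf (sLJ n) := by
  apply egf_mul_of_bc
  intro j
  refine Finset.sum_congr rfl fun p _ => ?_
  simp only [LJ, sLJ]
  ring

lemma egf_famU_mul {m1 m2 n1 n2 : ℕ} (hm : Nat.Coprime m1 m2) (hn : Nat.Coprime n1 n2)
    (h1 : m1 ≠ 0) (h2 : m2 ≠ 0) (h3 : n1 ≠ 0) (h4 : n2 ≠ 0) :
    egf (famU (m1 * m2) (n1 * n2)) = egf (famU m1 n1) * egf (famU m2 n2) := by
  rw [egf_famU, egf_famU, egf_famU, egf_LJ_mul hm h1 h2, egf_sLJ_mul hn h3 h4]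
  ring

noncomputable def famg {q₀ : ℕ} (χ : DirichletCharacter ℂ q₀) (q : ℕ) : ℕ → ℂ := fun j =>
  ∑ m ∈ q.divisors, χ (m : ZMod q₀) * famU m (q / m) j

lemma LambdaStar_eq {q₀ : ℕ} (χ : DirichletCharacter ℂ q₀) (q j : ℕ) :
    LambdaStar χ j q = (((Nat.gcd q q₀).divisors.card : ℂ) / (q.divisors.card : ℂ))
      * (2⁻¹ : ℂ) ^ j * famg χ q j := by
  rw [LambdaStar]
  have hc : (((Nat.gcd q q₀).divisors.card : ℂ)) / (2 ^ j * (q.divisors.card : ℂ))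
      = (((Nat.gcd q q₀).divisors.card : ℂ) / (q.divisors.card : ℂ)) * (2⁻¹ : ℂ) ^ j := by
    rw [div_mul_eq_div_div_swap, div_eq_mul_inv (((Nat.gcd q q₀).divisors.card : ℂ)
      / (q.divisors.card : ℂ)), inv_pow]
  rw [hc]
  rfl

lemma egf_famLS {q₀ : ℕ} (χ : DirichletCharacter ℂ q₀) (q : ℕ) :
    egf (fun j => LambdaStar χ j q)
      = PowerSeries.C (((Nat.gcd q q₀).divisors.card : ℂ) / (q.divisors.card : ℂ))
        * rescale (2⁻¹ : ℂ) (egf (famg χ q)) := by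
  rw [show (fun j => LambdaStar χ j q)
      = fun j => (((Nat.gcd q q₀).divisors.card : ℂ) / (q.divisors.card : ℂ))
        * (2⁻¹ : ℂ) ^ j * famg χ q j from funext fun j => LambdaStar_eq χ q j]
  exact egf_rescale _ _ _

lemma egf_famg_expand {q₀ : ℕ} (χ : DirichletCharacter ℂ q₀) (q : ℕ) :
    egf (famg χ q) = ∑ m ∈ q.divisors, PowerSeries.C (χ (m : ZMod q₀)) * egf (famU m (q / m)) := by
  rw [show famg χ q = fun j => ∑ m ∈ q.divisors, χ (m : ZMod q₀) * famU m (q / m) j from rfl,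
    egf_sum]
  exact Finset.sum_congr rfl fun m _ => egf_smul _ _

lemma egf_famg_mul {q₀ : ℕ} (χ : DirichletCharacter ℂ q₀) {q r : ℕ} (h : Nat.Coprime q r)
    (hq : q ≠ 0) (hr : r ≠ 0) :
    egf (famg χ (q * r)) = egf (famg χ q) * egf (famg χ r) := by
  rw [egf_famg_expand, egf_famg_expand, egf_famg_expand, sum_div_split h, Finset.sum_mul_sum]
  refine Finset.sum_congr rfl fun a ha => Finset.sum_congr rfl fun b hb => ?_
  obtain ⟨ha1, -⟩ := Nat.mem_divisors.mp ha
  obtain ⟨hb1, -⟩ := Nat.mem_divisors.mp hb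
  have ha0 : a ≠ 0 := (Nat.pos_of_mem_divisors ha).ne'
  have hb0 : b ≠ 0 := (Nat.pos_of_mem_divisors hb).ne'
  have hqa : q / a ≠ 0 :=
    (Nat.div_pos (Nat.le_of_dvd (Nat.pos_of_ne_zero hq) ha1) (Nat.pos_of_ne_zero ha0)).ne'
  have hrb : r / b ≠ 0 :=
    (Nat.div_pos (Nat.le_of_dvd (Nat.pos_of_ne_zero hr) hb1) (Nat.pos_of_ne_zero hb0)).ne'
  have hdiv : q * r / (a * b) = q / a * (r / b) := (Nat.div_mul_div_comm ha1 hb1).symm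
  have hab : a.Coprime b := (h.coprime_dvd_right hb1).coprime_dvd_left ha1
  have hqr2 : (q / a).Coprime (r / b) :=
    (h.coprime_dvd_right (Nat.div_dvd_of_dvd hb1)).coprime_dvd_left (Nat.div_dvd_of_dvd ha1)
  have hchi : χ ((a * b : ℕ) : ZMod q₀) = χ (a : ZMod q₀) * χ (b : ZMod q₀) := by
    push_cast
    rw [map_mul]
  rw [hdiv, hchi, egf_famU_mul hab hqr2 ha0 hb0 hqa hrb, map_mul]
  ring

lemma egf_LS_mul {q₀ : ℕ} (χ : DirichletCharacter ℂ q₀) {q r : ℕ} (h : Nat.Coprime q r)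
    (hq : q ≠ 0) (hr : r ≠ 0) :
    egf (fun j => LambdaStar χ j (q * r))
      = egf (fun j => LambdaStar χ j q) * egf (fun j => LambdaStar χ j r) := by
  have hgcd : Nat.gcd (q * r) q₀ = Nat.gcd q q₀ * Nat.gcd r q₀ := by
    rw [Nat.gcd_comm (q * r) q₀, Nat.Coprime.gcd_mul q₀ h, Nat.gcd_comm q₀ q, Nat.gcd_comm q₀ r]
  have hcopg : (Nat.gcd q q₀).Coprime (Nat.gcd r q₀) :=
    (h.coprime_dvd_right (Nat.gcd_dvd_left r q₀)).coprime_dvd_left (Nat.gcd_dvd_left q q₀)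
  have hτg : (((Nat.gcd (q * r) q₀).divisors.card : ℂ))
      = ((Nat.gcd q q₀).divisors.card : ℂ) * ((Nat.gcd r q₀).divisors.card : ℂ) := by
    rw [hgcd, Nat.Coprime.card_divisors_mul hcopg]
    push_cast
    ring
  have hτ : (((q * r).divisors.card : ℂ)) = (q.divisors.card : ℂ) * (r.divisors.card : ℂ) := by
    rw [Nat.Coprime.card_divisors_mul h]
    push_cast
    ring
  rw [egf_famLS, egf_famLS, egf_famLS, egf_famg_mul χ h hq hr, map_mul, hτg, hτ,
    ← div_mul_div_comm, map_mul]
  ring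

lemma egf_S_mul {q₀ : ℕ} (χ : DirichletCharacter ℂ q₀) {u v : ℕ} (h : Nat.Coprime u v)
    (hu : u ≠ 0) (hv : v ≠ 0) :
    egf (fun j => ∑ q ∈ (u * v).divisors, LambdaStar χ j q)
      = egf (fun j => ∑ q ∈ u.divisors, LambdaStar χ j q)
        * egf (fun j => ∑ q ∈ v.divisors, LambdaStar χ j q) := by
  rw [show (fun j => ∑ q ∈ (u * v).divisors, LambdaStar χ j q)
      = fun j => ∑ a ∈ u.divisors, ∑ b ∈ v.divisors, LambdaStar χ j (a * b)
      from funext fun j => sum_div_split h _]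
  rw [egf_sum, egf_sum, egf_sum, Finset.sum_mul_sum]
  refine Finset.sum_congr rfl fun a ha => ?_
  rw [egf_sum]
  refine Finset.sum_congr rfl fun b hb => ?_
  obtain ⟨ha1, -⟩ := Nat.mem_divisors.mp ha
  obtain ⟨hb1, -⟩ := Nat.mem_divisors.mp hb
  have hab : a.Coprime b := (h.coprime_dvd_right hb1).coprime_dvd_left ha1
  exact egf_LS_mul χ hab (Nat.pos_of_mem_divisors ha).ne' (Nat.pos_of_mem_divisors hb).ne'

/-! ### Computations at `1` and at primes -/

lemma LambdaJ_one (j : ℕ) : LambdaJ j 1 = 0 ^ j := by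
  simp [LambdaJ]

lemma LambdaJ_prime {p : ℕ} (hp : p.Prime) (j : ℕ) :
    LambdaJ j p = Real.log p ^ j - 0 ^ j := by
  rw [LambdaJ, hp.divisors, Finset.sum_pair hp.one_lt.ne]
  rw [ArithmeticFunction.moebius_apply_one, ArithmeticFunction.moebius_apply_prime hp,
    Nat.div_one, Nat.div_self hp.pos]
  push_cast
  simp [Real.log_one]
  ring

lemma lamJ_one {q₀ : ℕ} (χ : DirichletCharacter ℂ q₀) (j : ℕ) : lamJ χ j 1 = 0 ^ j := by
  simp [lamJ]

lemma lamFun_one {q₀ : ℕ} (χ : DirichletCharacter ℂ q₀) : lamFun χ 1 = 1 := by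
  simp [lamFun]

lemma lamFun_prime {q₀ : ℕ} (χ : DirichletCharacter ℂ q₀) {p : ℕ} (hp : p.Prime) :
    lamFun χ p = 1 + χ ((p : ℕ) : ZMod q₀) := by
  rw [lamFun, hp.divisors, Finset.sum_pair hp.one_lt.ne]
  simp

lemma lamJ_prime {q₀ : ℕ} (χ : DirichletCharacter ℂ q₀) {p : ℕ} (hp : p.Prime) (j : ℕ) :
    lamJ χ j p = (((-(Real.log p / 2)) ^ j : ℝ) : ℂ)
      + χ ((p : ℕ) : ZMod q₀) * (((Real.log p / 2) ^ j : ℝ) : ℂ) := by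
  rw [lamJ, hp.divisors, Finset.sum_pair hp.one_lt.ne]
  have hp0 : (0:ℝ) < (p : ℝ) := by exact_mod_cast hp.pos
  have h1 : Real.log ((1 : ℕ) / Real.sqrt p) = -(Real.log p / 2) := by
    push_cast
    rw [one_div, Real.log_inv, Real.log_sqrt hp0.le]
  have h2 : Real.log ((p : ℝ) / Real.sqrt p) = Real.log p / 2 := by
    rw [Real.log_div hp0.ne' (Real.sqrt_ne_zero'.mpr hp0), Real.log_sqrt hp0.le]
    ring
  rw [h1, h2]
  simp

lemma LambdaStar_one {q₀ : ℕ} (χ : DirichletCharacter ℂ q₀) (j : ℕ) :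
    LambdaStar χ j 1 = 0 ^ j := by
  rw [LambdaStar]
  simp only [Nat.gcd_one_left, Nat.divisors_one, Finset.card_singleton, Finset.sum_singleton,
    Nat.cast_one, map_one, Nat.div_one, one_mul]
  rcases j with _ | k
  · norm_num [LambdaJ_one]
  · rw [Finset.sum_eq_zero, mul_zero, zero_pow (Nat.succ_ne_zero k)]
    intro p hp
    have hsum := Finset.HasAntidiagonal.mem_antidiagonal.mp hp
    rw [LambdaJ_one, LambdaJ_one]
    rcases Nat.eq_zero_or_pos p.1 with h1 | h1
    · have : p.2 ≠ 0 := by omega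
      push_cast
      rw [zero_pow this]
      ring
    · push_cast
      rw [zero_pow h1.ne']
      ring

lemma LambdaStar_prime {q₀ : ℕ} (χ : DirichletCharacter ℂ q₀) {p : ℕ} (hp : p.Prime) (j : ℕ) :
    LambdaStar χ j p = ((Nat.gcd p q₀).divisors.card : ℂ) / (2 ^ j * 2) *
      (((-1) ^ j + χ ((p : ℕ) : ZMod q₀)) * ((((Real.log p) ^ j : ℝ) : ℂ) - 0 ^ j)) := by
  rw [LambdaStar, hp.divisors, Finset.card_pair hp.one_lt.ne, Finset.sum_pair hp.one_lt.ne]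
  rw [Nat.div_one, Nat.div_self hp.pos]
  have hA : ∑ q ∈ Finset.HasAntidiagonal.antidiagonal j, (j.choose q.1 : ℂ) * (-1) ^ q.2
        * ((LambdaJ q.1 1 : ℝ) : ℂ) * ((LambdaJ q.2 p : ℝ) : ℂ)
      = (-1) ^ j * ((((Real.log p) ^ j : ℝ) : ℂ) - 0 ^ j) := by
    rw [Finset.sum_eq_single (0, j)]
    · rw [LambdaJ_one, LambdaJ_prime hp]
      push_cast
      simp
    · intro q hq hne
      have hsum := Finset.HasAntidiagonal.mem_antidiagonal.mp hq
      have h1 : q.1 ≠ 0 := by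
        intro h0
        exact hne (Prod.ext h0 (by omega))
      rw [LambdaJ_one]
      push_cast
      rw [zero_pow h1]
      ring
    · intro h
      exact absurd (Finset.HasAntidiagonal.mem_antidiagonal.mpr (by simp)) h
  have hB : ∑ q ∈ Finset.HasAntidiagonal.antidiagonal j, (j.choose q.1 : ℂ) * (-1) ^ q.2
        * ((LambdaJ q.1 p : ℝ) : ℂ) * ((LambdaJ q.2 1 : ℝ) : ℂ)
      = (((Real.log p) ^ j : ℝ) : ℂ) - 0 ^ j := by
    rw [Finset.sum_eq_single (j, 0)]
    · rw [LambdaJ_one, LambdaJ_prime hp]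
      push_cast
      simp
    · intro q hq hne
      have hsum := Finset.HasAntidiagonal.mem_antidiagonal.mp hq
      have h2 : q.2 ≠ 0 := by
        intro h0
        exact hne (Prod.ext (by omega) h0)
      rw [LambdaJ_one]
      push_cast
      rw [zero_pow h2]
      ring
    · intro h
      exact absurd (Finset.HasAntidiagonal.mem_antidiagonal.mpr (by simp)) h
  rw [hA, hB]
  simp only [Nat.cast_one, map_one]
  push_cast
  ring

set_option maxRecDepth 4000 in
lemma prime_case {q₀ : ℕ} (χ : DirichletCharacter ℂ q₀) (hq : 3 ≤ q₀)
    (hval : ∀ n : ZMod q₀, χ n = -1 ∨ χ n = 0 ∨ χ n = 1) {p : ℕ} (hp : p.Prime)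
    (hlam : lamFun χ p ≠ 0) (j : ℕ) :
    lamJ χ j p = lamFun χ p * ∑ q ∈ p.divisors, LambdaStar χ j q := by
  haveI : NeZero q₀ := ⟨by omega⟩
  rw [hp.divisors, Finset.sum_pair hp.one_lt.ne, LambdaStar_one, LambdaStar_prime χ hp,
    lamJ_prime χ hp, lamFun_prime χ hp]
  have hχp := hval ((p : ℕ) : ZMod q₀)
  rcases hχp with h | h | h
  · exfalso
    rw [lamFun_prime χ hp, h] at hlam
    simp at hlam
  · have hdvd : p ∣ q₀ := by
      by_contra hnd
      have hcop : Nat.Coprime p q₀ := (Nat.Prime.coprime_iff_not_dvd hp).mpr hnd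
      have hunit : IsUnit ((p : ℕ) : ZMod q₀) := (ZMod.isUnit_iff_coprime p q₀).mpr hcop
      exact (hunit.map χ).ne_zero h
    have hgcd : Nat.gcd p q₀ = p := Nat.gcd_eq_left hdvd
    rw [h, hgcd, hp.divisors, Finset.card_pair hp.one_lt.ne]
    rcases j with _ | k
    · norm_num
    · push_cast
      simp only [zero_pow (Nat.succ_ne_zero k)]
      rw [neg_pow, div_pow]
      field_simp
      ring
  · have hnd : ¬ p ∣ q₀ := by
      intro hdvd
      have hnu : ¬ IsUnit ((p : ℕ) : ZMod q₀) := by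
        intro hu
        have hcop : Nat.Coprime p q₀ := (ZMod.isUnit_iff_coprime p q₀).mp hu
        exact (Nat.Prime.coprime_iff_not_dvd hp).mp hcop hdvd
      rw [χ.map_nonunit hnu] at h
      norm_num at h
    have hgcd : Nat.gcd p q₀ = 1 := (Nat.Prime.coprime_iff_not_dvd hp).mpr hnd
    rw [h, hgcd, Nat.divisors_one, Finset.card_singleton]
    rcases j with _ | k
    · norm_num
    · push_cast
      simp only [zero_pow (Nat.succ_ne_zero k)]
      rw [neg_pow, div_pow]
      field_simp
      ring

/-! ### The key identity by induction on squarefree numbers -/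

lemma key {q₀ : ℕ} (χ : DirichletCharacter ℂ q₀) (hq : 3 ≤ q₀)
    (hval : ∀ n : ZMod q₀, χ n = -1 ∨ χ n = 0 ∨ χ n = 1) :
    ∀ u : ℕ, Squarefree u → lamFun χ u ≠ 0 →
      ∀ j, lamJ χ j u = lamFun χ u * ∑ q ∈ u.divisors, LambdaStar χ j q := by
  intro u
  induction u using Nat.strong_induction_on with
  | _ u IH =>
    intro hsq hlam j
    rcases eq_or_ne u 1 with rfl | hu1
    · rw [lamJ_one, lamFun_one, Nat.divisors_one, Finset.sum_singleton, LambdaStar_one, one_mul]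
    · have hu0 : u ≠ 0 := hsq.ne_zero
      have upos : 0 < u := Nat.pos_of_ne_zero hu0
      have hp : (u.minFac).Prime := Nat.minFac_prime hu1
      have hpd : u.minFac ∣ u := Nat.minFac_dvd u
      set p := u.minFac with hpdef
      set m := u / p with hmdef
      have hum : u = p * m := (Nat.mul_div_cancel' hpd).symm
      have hm0 : m ≠ 0 := (Nat.div_pos (Nat.le_of_dvd upos hpd) hp.pos).ne'
      have hcop : Nat.Coprime p m := by
        rw [Nat.Prime.coprime_iff_not_dvd hp]
        intro hpm
        have hsq2 : p * p ∣ u := by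
          rw [hum]
          exact mul_dvd_mul_left p hpm
        exact hp.one_lt.ne' (Nat.isUnit_iff.mp (hsq p hsq2))
      have hmlt : m < u := Nat.div_lt_self upos hp.one_lt
      have hsqm : Squarefree m := hsq.squarefree_of_dvd ⟨p, by rw [hum]; ring⟩
      have hlams : lamFun χ u = lamFun χ p * lamFun χ m := by
        rw [hum]
        exact lamFun_mul χ hcop
      have hlp : lamFun χ p ≠ 0 := fun h0 => hlam (by rw [hlams, h0, zero_mul])
      have hlm : lamFun χ m ≠ 0 := fun h0 => hlam (by rw [hlams, h0, mul_zero])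
      have hIHm := IH m hmlt hsqm hlm
      have hIHp := prime_case χ hq hval hp hlp
      rw [hum]
      rw [lamJ_bc χ hcop hp.pos.ne' hm0 j]
      have hS : (∑ q ∈ (p * m).divisors, LambdaStar χ j q)
          = ∑ pr ∈ antidiagonal j, (j.choose pr.1 : ℂ)
            * (∑ q ∈ p.divisors, LambdaStar χ pr.1 q)
            * (∑ q ∈ m.divisors, LambdaStar χ pr.2 q) :=
        bc_of_egf_mul (egf_S_mul χ hcop hp.pos.ne' hm0) j
      rw [hS, lamFun_mul χ hcop, Finset.mul_sum]
      refine Finset.sum_congr rfl fun pr _ => ?_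
      rw [hIHp pr.1, hIHm pr.2]
      ring

end St18

theorem statement18 :
    ∀ (q₀ : ℕ) (χ : DirichletCharacter ℂ q₀),
      3 ≤ q₀ → χ.IsPrimitive →
      (∀ n : ZMod q₀, χ n = -1 ∨ χ n = 0 ∨ χ n = 1) →
      ∀ j : ℕ, ∀ u v : ℕ, 0 < u → 0 < v → Nat.Coprime u v →
        Squarefree (u * v) → lamFun χ (u * v) ≠ 0 →
        lamJ χ j (u * v) =
          lamFun χ (u * v) *
            ∑ p ∈ Finset.HasAntidiagonal.antidiagonal j,
              (j.choose p.1 : ℂ) *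
                (∑ q ∈ u.divisors, LambdaStar χ p.1 q) *
                (∑ r ∈ v.divisors, LambdaStar χ p.2 r) := by
  intro q₀ χ hq hprim hval j u v hu hv hcop hsq hlam
  obtain ⟨-, hsqu, hsqv⟩ := Nat.squarefree_mul_iff.mp hsq
  have hlams : lamFun χ (u * v) = lamFun χ u * lamFun χ v := St18.lamFun_mul χ hcop
  have hlu : lamFun χ u ≠ 0 := fun h0 => hlam (by rw [hlams, h0, zero_mul])
  have hlv : lamFun χ v ≠ 0 := fun h0 => hlam (by rw [hlams, h0, mul_zero])
  rw [St18.lamJ_bc χ hcop hu.ne' hv.ne' j, hlams, Finset.mul_sum]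
  refine Finset.sum_congr rfl fun p _ => ?_
  rw [St18.key χ hq hval u hsqu hlu p.1, St18.key χ hq hval v hsqv hlv p.2]
  ring
end
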